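/- Let n be a natural number, G a group, and ρ : G →* (V ≃ₗ[ℂ] V) a linear action of G on V = (Fin n → ℂ). Let r be a natural number and for each i ∈ Fin r let fᵢ ∈ MvPolynomial (Fin n) ℂ be an irreducible polynomial, homogeneous of degree dᵢ, such that fᵢ(ρ(g)v) = χᵢ(g)·fᵢ(v) for all g, v, where χᵢ : G →* ℂˣ; assume fᵢ and fⱼ are not associated for i ≠ j. Let k : Fin r → ℕ, set F = ∏ᵢ fᵢ^{kᵢ} and X(g) = ∏ᵢ χᵢ(g)^{kᵢ}, and let h₁ ∈ MvPolynomial (Fin n) ℂ be homogeneous of degree ∑ᵢ kᵢ·dᵢ with h₁ and F relatively prime (IsRelPrime h₁ F). Then the following are equivalent: (1) there exists an additive Φ : G → ℂ (Φ(g₁g₂) = Φ(g₁) + Φ(g₂)) such that h₁(ρ(g)v) = X(g)·(F(v)·Φ(g) + h₁(v)) for all g ∈ G, v ∈ V; (2) for every i with kᵢ > 0 and every g ∈ G there exists q ∈ MvPolynomial (Fin n) ℂ with h₁(ρ(g)v) − X(g)·h₁(v) = fᵢ(v)^{kᵢ}·q(v) for all v ∈ V; (3) for every g ∈ G there exists q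 ∈ MvPolynomial (Fin n) ℂ with h₁(ρ(g)v) − X(g)·h₁(v) = F(v)·q(v) for all v ∈ V. -/

import Mathlib

open MvPolynomial

private lemma eq_C_of_mul_isHomogeneous
    {σ : Type*} {R : Type*} [CommRing R] [IsDomain R]
    {p q : MvPolynomial σ R} {N : ℕ}
    (hp : p.IsHomogeneous N) (hp0 : p ≠ 0)
    (hpq : (p * q).IsHomogeneous N) : q = C (coeff 0 q) := by
  have key : ∀ m : ℕ, m ≠ 0 → homogeneousComponent m q = 0 := by
    intro m hm
    by_cases hle : m ≤ q.totalDegree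
    · have hmul : p * q = ∑ i ∈ Finset.range (q.totalDegree + 1),
          p * homogeneousComponent i q := by
        rw [← Finset.mul_sum, sum_homogeneousComponent]
      have hcomp : homogeneousComponent (N + m) (p * q) = p * homogeneousComponent m q := by
        rw [hmul, map_sum, Finset.sum_eq_single_of_mem m
          (Finset.mem_range.mpr (Nat.lt_succ_of_le hle))]
        · rw [homogeneousComponent_of_mem
            (hp.mul (homogeneousComponent_isHomogeneous m q)), if_pos rfl]
        · intro i _ hi
          rw [homogeneousComponent_of_mem
            (hp.mul (homogeneousComponent_isHomogeneous i q)), if_neg]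
          intro hcon
          exact hi (Nat.add_left_cancel hcon).symm
      have hz : homogeneousComponent (N + m) (p * q) = 0 := by
        rw [homogeneousComponent_of_mem hpq, if_neg]
        simpa using hm
      rw [hz] at hcomp
      rcases mul_eq_zero.mp hcomp.symm with h | h
      · exact absurd h hp0
      · exact h
    · exact homogeneousComponent_eq_zero _ _ (not_le.mp hle)
  conv_lhs => rw [← sum_homogeneousComponent q]
  rw [Finset.sum_eq_single_of_mem 0 (Finset.mem_range.mpr (Nat.succ_pos _))
    (fun i _ hi => key i hi), homogeneousComponent_zero]

/-- Characterization of additive relative invariants `h₁ / ∏ᵢ fᵢ^{kᵢ}`: the existence of an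
additive `Φ` satisfying the global equation is equivalent to `h₁ ∘ ρ(g) − X(g)·h₁` agreeing
to order `kᵢ − 1` on each `V(fᵢ)` with `kᵢ > 0`, and to its divisibility by `F = ∏ᵢ fᵢ^{kᵢ}`. -/
theorem additive_relative_invariant_tfae
    (n : ℕ) {G : Type*} [Group G]
    (ρ : G →* ((Fin n → ℂ) ≃ₗ[ℂ] (Fin n → ℂ)))
    (r : ℕ) (f : Fin r → MvPolynomial (Fin n) ℂ) (d : Fin r → ℕ)
    (χ : Fin r → (G →* ℂˣ))
    (hirr : ∀ i, Irreducible (f i))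
    (hhom : ∀ i, (f i).IsHomogeneous (d i))
    (hrel : ∀ i (g : G) (v : Fin n → ℂ),
      eval (ρ g v) (f i) = (χ i g : ℂ) * eval v (f i))
    (hassoc : ∀ i j, i ≠ j → ¬ Associated (f i) (f j))
    (k : Fin r → ℕ)
    (F : MvPolynomial (Fin n) ℂ) (hF : F = ∏ i, (f i) ^ (k i))
    (h₁ : MvPolynomial (Fin n) ℂ)
    (hh₁hom : h₁.IsHomogeneous (∑ i, k i * d i))
    (hrp : IsRelPrime h₁ F) :
    ((∃ Φ : G → ℂ, (∀ g₁ g₂ : G, Φ (g₁ * g₂) = Φ g₁ + Φ g₂) ∧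
        ∀ (g : G) (v : Fin n → ℂ),
          eval (ρ g v) h₁ =
            (∏ i, ((χ i g : ℂ)) ^ (k i)) * (eval v F * Φ g + eval v h₁)) ↔
      (∀ i, 0 < k i → ∀ g : G, ∃ q : MvPolynomial (Fin n) ℂ,
        ∀ v : Fin n → ℂ,
          eval (ρ g v) h₁ - (∏ j, ((χ j g : ℂ)) ^ (k j)) * eval v h₁ =
            (eval v (f i)) ^ (k i) * eval v q)) ∧
    ((∀ i, 0 < k i → ∀ g : G, ∃ q : MvPolynomial (Fin n) ℂ,
        ∀ v : Fin n → ℂ,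
          eval (ρ g v) h₁ - (∏ j, ((χ j g : ℂ)) ^ (k j)) * eval v h₁ =
            (eval v (f i)) ^ (k i) * eval v q) ↔
      (∀ g : G, ∃ q : MvPolynomial (Fin n) ℂ,
        ∀ v : Fin n → ℂ,
          eval (ρ g v) h₁ - (∏ j, ((χ j g : ℂ)) ^ (k j)) * eval v h₁ =
            eval v F * eval v q)) := by
  classical
  let X : G → ℂ := fun g => ∏ i, ((χ i g : ℂ)) ^ (k i)
  have hXdef : ∀ g, X g = ∏ i, ((χ i g : ℂ)) ^ (k i) := fun g => rfl
  have hXne : ∀ g, X g ≠ 0 := fun g =>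
    Finset.prod_ne_zero_iff.mpr fun i _ => pow_ne_zero _ (Units.ne_zero (χ i g))
  have hXmul : ∀ g₁ g₂ : G, X (g₁ * g₂) = X g₁ * X g₂ := by
    intro g₁ g₂
    simp only [hXdef, map_mul, Units.val_mul, mul_pow, Finset.prod_mul_distrib]
  have hFne : F ≠ 0 := by
    rw [hF]
    exact Finset.prod_ne_zero_iff.mpr fun i _ => pow_ne_zero _ (hirr i).ne_zero
  have hFhom : F.IsHomogeneous (∑ i, k i * d i) := by
    have hsum : (∑ i, k i * d i) = ∑ i, d i * k i :=
      Finset.sum_congr rfl fun i _ => mul_comm _ _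
    rw [hF, hsum]
    exact IsHomogeneous.prod Finset.univ _ _ fun i _ => (hhom i).pow (k i)
  have hFrel : ∀ (g : G) (v : Fin n → ℂ), eval (ρ g v) F = X g * eval v F := by
    intro g v
    rw [hF, hXdef]
    simp only [map_prod, map_pow, hrel, mul_pow, Finset.prod_mul_distrib]
  -- substitution polynomials realizing `v ↦ ρ g v`
  have hρ : ∀ (g : G) (v : Fin n → ℂ), ρ g v = ∑ l, v l • ρ g (Pi.single l 1) := by
    intro g v
    have hv : v = ∑ l : Fin n, v l • (Pi.single l 1 : Fin n → ℂ) := by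
      ext j
      simp [Finset.sum_apply, Pi.single_apply]
    conv_lhs => rw [hv]
    rw [map_sum]
    simp [map_smul]
  let σp : G → Fin n → MvPolynomial (Fin n) ℂ :=
    fun g j => ∑ l, C (ρ g (Pi.single l 1) j) * MvPolynomial.X l
  have hσeval : ∀ (g : G) (v : Fin n → ℂ) (j : Fin n), eval v (σp g j) = ρ g v j := by
    intro g v j
    rw [hρ g v]
    simp [σp, Finset.sum_apply, mul_comm]
  have hσhom : ∀ (g : G) (j : Fin n), (σp g j).IsHomogeneous 1 := by
    intro g j
    exact IsHomogeneous.sum _ _ _ fun l _ => isHomogeneous_C_mul_X _ _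
  let H : G → MvPolynomial (Fin n) ℂ := fun g => aeval (σp g) h₁
  have hHeval : ∀ (g : G) (v : Fin n → ℂ), eval v (H g) = eval (ρ g v) h₁ := by
    intro g v
    have h1 : H g = eval₂ C (σp g) h₁ := by
      show aeval (σp g) h₁ = _
      rw [aeval_def, algebraMap_eq]
    rw [h1, ← eval_assoc]
    have hfun : (⇑(eval v) ∘ σp g) = ρ g v := by
      funext j
      rw [Function.comp_apply]
      exact hσeval g v j
    rw [hfun]
  have hHhom : ∀ g : G, (H g).IsHomogeneous (∑ i, k i * d i) := by
    intro g
    simpa [H] using hh₁hom.aeval (σp g) (hσhom g)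
  let D : G → MvPolynomial (Fin n) ℂ := fun g => H g - C (X g) * h₁
  have hDeval : ∀ (g : G) (v : Fin n → ℂ),
      eval v (D g) = eval (ρ g v) h₁ - X g * eval v h₁ := by
    intro g v
    show eval v (H g - C (X g) * h₁) = _
    rw [map_sub, map_mul, eval_C, hHeval]
  have hDhom : ∀ g : G, (D g).IsHomogeneous (∑ i, k i * d i) :=
    fun g => (hHhom g).sub (hh₁hom.C_mul _)
  -- bridge between pointwise factorizations and divisibility
  have bridge : ∀ (g : G) (P : MvPolynomial (Fin n) ℂ),
      (∃ q : MvPolynomial (Fin n) ℂ, ∀ v : Fin n → ℂ,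
        eval (ρ g v) h₁ - X g * eval v h₁ = eval v P * eval v q) ↔ P ∣ D g := by
    intro g P
    constructor
    · rintro ⟨q, hq⟩
      exact ⟨q, MvPolynomial.funext fun v => by rw [hDeval, hq, map_mul]⟩
    · rintro ⟨q, hq⟩
      exact ⟨q, fun v => by rw [← hDeval, hq, map_mul]⟩
  -- the implications
  have h1to3 : (∃ Φ : G → ℂ, (∀ g₁ g₂ : G, Φ (g₁ * g₂) = Φ g₁ + Φ g₂) ∧
      ∀ (g : G) (v : Fin n → ℂ),
        eval (ρ g v) h₁ = X g * (eval v F * Φ g + eval v h₁)) →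
      ∀ g : G, F ∣ D g := by
    rintro ⟨Φ, -, hΦ⟩ g
    refine ⟨C (X g * Φ g), MvPolynomial.funext fun v => ?_⟩
    rw [hDeval, hΦ g v, map_mul, eval_C]
    ring
  have h3to2 : (∀ g : G, F ∣ D g) → ∀ i, 0 < k i → ∀ g : G, f i ^ k i ∣ D g := by
    intro h i _ g
    exact dvd_trans (by rw [hF]; exact Finset.dvd_prod_of_mem _ (Finset.mem_univ i)) (h g)
  have h2to3 : (∀ i, 0 < k i → ∀ g : G, f i ^ k i ∣ D g) → ∀ g : G, F ∣ D g := by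
    intro h g
    rw [hF]
    refine Fintype.prod_dvd_of_isRelPrime ?_ ?_
    · intro i j hij
      have hbase : IsRelPrime (f i) (f j) :=
        (hirr i).isRelPrime_iff_not_dvd.mpr fun hdvd =>
          hassoc i j hij ((hirr i).associated_of_dvd (hirr j) hdvd)
      exact hbase.pow_left.pow_right
    · intro i
      rcases Nat.eq_zero_or_pos (k i) with h0 | hpos
      · simp [h0]
      · exact h i hpos g
  have h3to1 : (∀ g : G, F ∣ D g) →
      (∃ Φ : G → ℂ, (∀ g₁ g₂ : G, Φ (g₁ * g₂) = Φ g₁ + Φ g₂) ∧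
        ∀ (g : G) (v : Fin n → ℂ),
          eval (ρ g v) h₁ = X g * (eval v F * Φ g + eval v h₁)) := by
    intro h
    choose q hq using h
    have hqC : ∀ g : G, q g = C (coeff 0 (q g)) := by
      intro g
      exact eq_C_of_mul_isHomogeneous hFhom hFne (by rw [← hq g]; exact hDhom g)
    refine ⟨fun g => coeff 0 (q g) / X g, ?_, ?_⟩
    swap
    · intro g v
      have h1 : eval (ρ g v) h₁ - X g * eval v h₁ = eval v F * coeff 0 (q g) := by
        rw [← hDeval, hq g, map_mul, hqC g, eval_C, coeff_zero_C]
      have hXΦ : X g * (coeff 0 (q g) / X g) = coeff 0 (q g) :=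
        mul_div_cancel₀ _ (hXne g)
      linear_combination h1 - eval v F * hXΦ
    · intro g₁ g₂
      obtain ⟨v₀, hv₀⟩ : ∃ v : Fin n → ℂ, eval v F ≠ 0 := by
        by_contra hc
        push_neg at hc
        exact hFne (MvPolynomial.funext fun v => by simp [hc v])
      have main : ∀ (g : G) (v : Fin n → ℂ),
          eval (ρ g v) h₁ = X g * (eval v F * (coeff 0 (q g) / X g) + eval v h₁) := by
        intro g v
        have h1 : eval (ρ g v) h₁ - X g * eval v h₁ = eval v F * coeff 0 (q g) := by
          rw [← hDeval, hq g, map_mul, hqC g, eval_C, coeff_zero_C]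
        have hXΦ : X g * (coeff 0 (q g) / X g) = coeff 0 (q g) :=
          mul_div_cancel₀ _ (hXne g)
        linear_combination h1 - eval v F * hXΦ
      have e1 := main (g₁ * g₂) v₀
      have hcomp : ρ (g₁ * g₂) v₀ = ρ g₁ (ρ g₂ v₀) := by
        rw [map_mul]; rfl
      have e2 : eval (ρ (g₁ * g₂) v₀) h₁ =
          X g₁ * (X g₂ * eval v₀ F * (coeff 0 (q g₁) / X g₁) +
            X g₂ * (eval v₀ F * (coeff 0 (q g₂) / X g₂) + eval v₀ h₁)) := by
        rw [hcomp, main g₁ (ρ g₂ v₀), hFrel g₂ v₀, main g₂ v₀]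
      have e3 : X g₁ * X g₂ * (eval v₀ F * (coeff 0 (q (g₁ * g₂)) / (X g₁ * X g₂))) =
          X g₁ * X g₂ * (eval v₀ F *
            (coeff 0 (q g₁) / X g₁ + coeff 0 (q g₂) / X g₂)) := by
        have e4 := e1.symm.trans e2
        rw [hXmul] at e4
        linear_combination e4
      have e5 := mul_left_cancel₀ (mul_ne_zero (hXne g₁) (hXne g₂)) e3
      show coeff 0 (q (g₁ * g₂)) / X (g₁ * g₂) = _
      rw [hXmul g₁ g₂]
      exact mul_left_cancel₀ hv₀ e5
  -- translate conditions
  have c2 : (∀ i, 0 < k i → ∀ g : G, ∃ q : MvPolynomial (Fin n) ℂ,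
      ∀ v : Fin n → ℂ,
        eval (ρ g v) h₁ - X g * eval v h₁ = (eval v (f i)) ^ (k i) * eval v q) ↔
      (∀ i, 0 < k i → ∀ g : G, f i ^ k i ∣ D g) := by
    constructor
    · intro h i hki g
      obtain ⟨q, hq⟩ := h i hki g
      exact (bridge g (f i ^ k i)).mp ⟨q, fun v => by rw [map_pow]; exact hq v⟩
    · intro h i hki g
      obtain ⟨q, hq⟩ := (bridge g (f i ^ k i)).mpr (h i hki g)
      exact ⟨q, fun v => by rw [← map_pow]; exact hq v⟩
  have c3 : (∀ g : G, ∃ q : MvPolynomial (Fin n) ℂ,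
      ∀ v : Fin n → ℂ,
        eval (ρ g v) h₁ - X g * eval v h₁ = eval v F * eval v q) ↔
      (∀ g : G, F ∣ D g) := forall_congr' fun g => bridge g F
  exact ⟨⟨fun h => c2.mpr (h3to2 (h1to3 h)), fun h => h3to1 (h2to3 (c2.mp h))⟩,
    ⟨fun h => c3.mpr (h2to3 (c2.mp h)), fun h => c2.mpr (h3to2 (c3.mp h))⟩⟩
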